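/- Suppose K_n = 0, K_p > 0, and θ ∈ ℝ with e^{iθ} ≠ 1 (corresponding to a transverse mode k ≠ 0 of the ring). Then for every pair of delays τ₁, τ₂ ≥ 0, the characteristic equation λ + K_p − K_p e^{−λ τ₁} e^{i θ} = 0 has no purely imaginary root λ = iω with ω ∈ ℝ. In particular, in the purely cooperative ring no transverse mode can undergo a stability switch through the imaginary axis. -/

import Mathlib

/-- If `K_n = 0`, `K_p > 0`, and `e^{iθ} ≠ 1` (a transverse mode), then for
every pair of delays `τ₁, τ₂ ≥ 0` the characteristic equation
`λ + K_p - K_p e^{-λτ₁} e^{iθ} = 0` has no purely imaginary root `λ = iω`, `ω ∈ ℝ`. -/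
theorem stmt_15 (Kp τ1 τ2 θ : ℝ) (hKp : 0 < Kp) (hτ1 : 0 ≤ τ1) (hτ2 : 0 ≤ τ2)
    (hθ : Complex.exp (Complex.I * θ) ≠ 1) :
    ¬ ∃ ω : ℝ,
      Complex.I * ω + (Kp : ℂ)
        - (Kp : ℂ) * Complex.exp (-(Complex.I * ω) * τ1) * Complex.exp (Complex.I * θ) = 0 := by
  rintro ⟨ω, h⟩
  have heq : Complex.I * ω + (Kp : ℂ)
      = (Kp : ℂ) * Complex.exp (-(Complex.I * ω) * τ1) * Complex.exp (Complex.I * θ) := by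
    linear_combination h
  have habs : ‖Complex.I * ω + (Kp : ℂ)‖ = Kp := by
    rw [heq]
    rw [norm_mul, norm_mul, Complex.norm_exp, Complex.norm_exp]
    have h1 : (-(Complex.I * ω) * τ1).re = 0 := by simp
    have h2 : (Complex.I * (θ:ℂ)).re = 0 := by simp
    rw [h1, h2]
    simp [Complex.norm_real, abs_of_pos hKp]
  have hsq : ω ^ 2 + Kp ^ 2 = Kp ^ 2 := by
    have := congrArg (· ^ 2) habs
    simp only [Complex.sq_norm] at this
    rw [Complex.normSq_apply] at this
    simp at this
    nlinarith [this]
  have hω : ω = 0 := by nlinarith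
  subst hω
  apply hθ
  have hKp' : (Kp : ℂ) ≠ 0 := by exact_mod_cast ne_of_gt hKp
  simp only [Complex.ofReal_zero, mul_zero, neg_zero, zero_mul, Complex.exp_zero, zero_add, mul_one] at heq
  exact mul_left_cancel₀ hKp' (heq.symm.trans (mul_one _).symm)
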